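/- Let N ≥ 1 and y be natural numbers and let p be a real number. Then Σ over all functions f : {1,…,y} → {0,1,…,N} such that there exists i ∈ {1,…,N} with i ∉ range(f), of p^{|{j : f(j) ≠ 0}|} · (1−N·p)^{|{j : f(j) = 0}|}, equals Σ_{k=1}^{N} (−1)^{k−1}·C(N,k)·(1−k·p)^{y}. In probabilistic terms: if y independent columns each equal symbol i with probability p for each i ∈ {1,…,N} and symbol 0 with probability 1−Np, then the probability that some symbol i ∈ {1,…,N} is avoided by all columns equals Σ_{k=1}^{N} (−1)^{k−1}·C(N,k)·(1−kp)^{y}. -/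

import Mathlib

open Finset

/-- Inclusion–exclusion for the probability that some scale value produces no cycle:
summing `p^{#{j : f j ≠ 0}} · (1−Np)^{#{j : f j = 0}}` over all functions
`f : {1,…,y} → {0,1,…,N}` avoiding at least one nonzero symbol equals
`Σ_{k=1}^{N} (−1)^{k−1}·C(N,k)·(1−kp)^y`, as a polynomial identity in the real `p`. -/
theorem stmt_17 (N : ℕ) (hN : 1 ≤ N) (y : ℕ) (p : ℝ) :
    ∑ f ∈ Finset.univ.filter
        (fun f : Fin y → Fin (N + 1) => ∃ i : Fin (N + 1), i ≠ 0 ∧ ∀ j, f j ≠ i),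
      p ^ (Finset.univ.filter (fun j => f j ≠ 0)).card *
        (1 - N * p) ^ (Finset.univ.filter (fun j => f j = 0)).card =
    ∑ k ∈ Finset.Icc 1 N,
      (-1 : ℝ) ^ (k - 1) * (N.choose k : ℝ) * (1 - k * p) ^ y := by
  classical
  set g : Fin (N+1) → ℝ := fun v => if v = 0 then 1 - N * p else p with hg
  set E : Finset (Fin (N+1)) := Finset.univ.filter (fun i => i ≠ 0) with hE
  have hEcard : E.card = N := by
    rw [hE, filter_ne', card_erase_of_mem (mem_univ _), card_univ, Fintype.card_fin]
    omega
  have h0E : (0 : Fin (N+1)) ∉ E := by simp [hE]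
  -- the weight is a product
  have hw : ∀ f : Fin y → Fin (N+1),
      p ^ (Finset.univ.filter (fun j => f j ≠ 0)).card *
        (1 - N * p) ^ (Finset.univ.filter (fun j => f j = 0)).card
      = ∏ j, g (f j) := by
    intro f
    simp only [hg]
    rw [Finset.prod_ite, Finset.prod_const, Finset.prod_const, mul_comm]
  -- sum of g over a complement
  have hsumg : ∀ T : Finset (Fin (N+1)), (0 : Fin (N+1)) ∉ T →
      ∑ v ∈ Tᶜ, g v = 1 - T.card * p := by
    intro T h0
    have h1 : ∑ v, g v = 1 := by
      simp only [hg]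
      rw [Finset.sum_ite, Finset.sum_const, Finset.sum_const]
      have e1 : Finset.univ.filter (fun v : Fin (N+1) => v = 0) = {0} := by
        ext v; simp
      have e2 : Finset.univ.filter (fun v : Fin (N+1) => ¬ v = 0) = Finset.univ.erase 0 :=
        filter_ne' _ _
      rw [e1, e2, card_erase_of_mem (mem_univ _), card_univ, Fintype.card_fin]
      simp
    have h2 : ∑ v ∈ T, g v = T.card * p := by
      rw [Finset.sum_eq_card_nsmul (b := p) (fun v hv => ?_), nsmul_eq_mul]
      simp only [hg]
      rw [if_neg]
      intro h; exact h0 (h ▸ hv)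
    have h3 := Finset.sum_compl_add_sum T g
    rw [h1, h2] at h3
    linarith
  -- sign sum identity
  have hsign : ∀ f : Fin y → Fin (N+1),
      ∑ T ∈ (E.powerset.erase ∅).filter (fun T => ∀ j, f j ∉ T), (-1:ℝ)^(T.card - 1)
      = if (∃ i : Fin (N+1), i ≠ 0 ∧ ∀ j, f j ≠ i) then 1 else 0 := by
    intro f
    set A : Finset (Fin (N+1)) := E.filter (fun i => ∀ j, f j ≠ i) with hA
    have hset : (E.powerset.erase ∅).filter (fun T => ∀ j, f j ∉ T) = A.powerset.erase ∅ := by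
      ext T
      simp only [mem_filter, mem_erase, mem_powerset, hA]
      constructor
      · rintro ⟨⟨hne, hTE⟩, hav⟩
        refine ⟨hne, fun i hi => mem_filter.2 ⟨hTE hi, fun j hj => hav j (hj ▸ hi)⟩⟩
      · rintro ⟨hne, hTA⟩
        refine ⟨⟨hne, fun i hi => (mem_filter.1 (hTA hi)).1⟩, fun j hj => ?_⟩
        exact (mem_filter.1 (hTA hj)).2 j rfl
    rw [hset]
    have hkey : ∑ m ∈ A.powerset, (-1:ℝ) ^ m.card = if A = ∅ then 1 else 0 := by
      have h := Finset.sum_powerset_neg_one_pow_card (x := A)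
      calc ∑ m ∈ A.powerset, (-1:ℝ) ^ m.card
          = ((∑ m ∈ A.powerset, (-1:ℤ) ^ m.card : ℤ) : ℝ) := by push_cast; rfl
        _ = _ := by rw [h]; split <;> simp
    have hins : A.powerset = insert ∅ (A.powerset.erase ∅) :=
      (insert_erase (empty_mem_powerset A)).symm
    have hsplit : ∑ m ∈ A.powerset, (-1:ℝ) ^ m.card
        = 1 + ∑ m ∈ A.powerset.erase ∅, (-1:ℝ) ^ m.card := by
      conv_lhs => rw [hins]
      rw [Finset.sum_insert (notMem_erase _ _)]
      simp
    have hflip : ∑ T ∈ A.powerset.erase ∅, (-1:ℝ)^(T.card - 1)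
        = - ∑ m ∈ A.powerset.erase ∅, (-1:ℝ) ^ m.card := by
      rw [← Finset.sum_neg_distrib]
      refine Finset.sum_congr rfl fun T hT => ?_
      have hTne : T ≠ ∅ := (mem_erase.1 hT).1
      have hc : 1 ≤ T.card := Nat.one_le_iff_ne_zero.2 (fun h => hTne (card_eq_zero.1 h))
      obtain ⟨m, hm⟩ := Nat.exists_eq_add_of_le hc
      rw [hm]
      simp [pow_add]
    have hA_iff : (∃ i : Fin (N+1), i ≠ 0 ∧ ∀ j, f j ≠ i) ↔ A ≠ ∅ := by
      rw [← nonempty_iff_ne_empty]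
      constructor
      · rintro ⟨i, hi0, hi⟩
        exact ⟨i, mem_filter.2 ⟨mem_filter.2 ⟨mem_univ _, hi0⟩, hi⟩⟩
      · rintro ⟨i, hi⟩
        have := mem_filter.1 hi
        exact ⟨i, (mem_filter.1 this.1).2, this.2⟩
    rw [hflip]
    have : ∑ m ∈ A.powerset.erase ∅, (-1:ℝ) ^ m.card = (if A = ∅ then 1 else 0) - 1 := by
      rw [← hkey, hsplit]; ring
    rw [this]
    by_cases hAe : A = ∅
    · simp [hAe, hA_iff]
    · simp [hAe, hA_iff]
  -- main computation
  calc
    ∑ f ∈ Finset.univ.filter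
        (fun f : Fin y → Fin (N + 1) => ∃ i : Fin (N + 1), i ≠ 0 ∧ ∀ j, f j ≠ i),
      p ^ (Finset.univ.filter (fun j => f j ≠ 0)).card *
        (1 - N * p) ^ (Finset.univ.filter (fun j => f j = 0)).card
      = ∑ f : Fin y → Fin (N+1),
          ∑ T ∈ (E.powerset.erase ∅).filter (fun T => ∀ j, f j ∉ T),
            (-1:ℝ)^(T.card - 1) * ∏ j, g (f j) := by
        rw [Finset.sum_filter]
        refine Finset.sum_congr rfl fun f _ => ?_
        rw [hw f, ← Finset.sum_mul, hsign f]
        by_cases hf : (∃ i : Fin (N+1), i ≠ 0 ∧ ∀ j, f j ≠ i) <;> simp [hf]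
    _ = ∑ T ∈ E.powerset.erase ∅, (-1:ℝ)^(T.card - 1) *
          ∑ f ∈ Fintype.piFinset (fun _ : Fin y => Tᶜ), ∏ j, g (f j) := by
        simp_rw [Finset.sum_filter]
        rw [Finset.sum_comm]
        refine Finset.sum_congr rfl fun T hT => ?_
        rw [Finset.mul_sum, ← Finset.sum_filter]
        have : Finset.univ.filter (fun f : Fin y → Fin (N+1) => ∀ j, f j ∉ T)
            = Fintype.piFinset (fun _ : Fin y => Tᶜ) := by
          ext f; simp [Fintype.mem_piFinset]
        rw [this]
    _ = ∑ T ∈ E.powerset.erase ∅, (-1:ℝ)^(T.card - 1) * (1 - T.card * p)^y := by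
        refine Finset.sum_congr rfl fun T hT => ?_
        have hTE : T ⊆ E := mem_powerset.1 (mem_erase.1 hT).2
        have h0T : (0 : Fin (N+1)) ∉ T := fun h => h0E (hTE h)
        rw [← Finset.prod_univ_sum (fun _ : Fin y => Tᶜ) (fun _ v => g v),
          hsumg T h0T, Finset.prod_const, card_univ, Fintype.card_fin]
    _ = ∑ k ∈ Finset.Icc 1 N,
          (-1 : ℝ) ^ (k - 1) * (N.choose k : ℝ) * (1 - k * p) ^ y := by
        have hG : ∑ T ∈ E.powerset.erase ∅, (-1:ℝ)^(T.card - 1) * (1 - T.card * p)^y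
            = ∑ T ∈ E.powerset,
                (if T.card = 0 then 0 else (-1:ℝ)^(T.card - 1) * (1 - T.card * p)^y) := by
          rw [← Finset.sum_erase E.powerset
            (f := fun T : Finset (Fin (N+1)) =>
              if T.card = 0 then (0:ℝ) else (-1:ℝ)^(T.card - 1) * (1 - T.card * p)^y)
            (a := ∅) (by simp)]
          refine Finset.sum_congr rfl fun T hT => ?_
          have hTne : T ≠ ∅ := (mem_erase.1 hT).1
          rw [if_neg (fun h => hTne (card_eq_zero.1 h))]
        rw [hG, Finset.sum_powerset]
        have hinner : ∀ k ∈ Finset.range (E.card + 1),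
            ∑ T ∈ Finset.powersetCard k E,
              (if T.card = 0 then 0 else (-1:ℝ)^(T.card - 1) * (1 - T.card * p)^y)
            = (N.choose k : ℝ) * (if k = 0 then 0 else (-1:ℝ)^(k - 1) * (1 - k * p)^y) := by
          intro k _
          rw [Finset.sum_eq_card_nsmul (b := if k = 0 then (0:ℝ) else (-1:ℝ)^(k - 1) * (1 - k * p)^y)
            (fun T hT => by rw [(Finset.mem_powersetCard.1 hT).2]),
            Finset.card_powersetCard, hEcard, nsmul_eq_mul]
        rw [Finset.sum_congr rfl hinner, hEcard]
        have hr : Finset.range (N + 1) = insert 0 (Finset.Icc 1 N) := by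
          ext k; simp; omega
        rw [hr, Finset.sum_insert (by simp)]
        norm_num
        refine Finset.sum_congr rfl fun k hk => ?_
        have hk1 : k ≠ 0 := by
          have := (Finset.mem_Icc.1 hk).1; omega
        rw [if_neg hk1]; ring
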